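/- Let F: ℝ^d → ℝ be L-smooth (‖∇F(x) − ∇F(y)‖ ≤ L‖x − y‖ for all x, y). For any sequences of vectors g₁, ..., g_T ∈ ℝ^d and positive non-increasing step sizes η₁ ≥ η₂ ≥ ... ≥ η_T > 0, the unprojected iterates w_{t+1} = w_t − η_t g_t satisfy Σ_{t=1}^{T} ‖∇F(w_t)‖² ≤ Δ_max/η_T + (L/2) Σ_{t=1}^{T} η_t ‖g_t‖² + Σ_{t=1}^{T} (∇F(w_t) − g_t)^⊤ ∇F(w_t), where Δ_t = F(w_t) − inf_w F(w) and Δ_max = max_{t∈[T]} Δ_t (assuming inf F > −∞). -/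

import Mathlib

open scoped RealInnerProductSpace

lemma line_hasDerivAt {d : ℕ} (F : EuclideanSpace ℝ (Fin d) → ℝ)
    (gradF : EuclideanSpace ℝ (Fin d) → EuclideanSpace ℝ (Fin d))
    (hgrad : ∀ x, HasGradientAt F (gradF x) x)
    (x v : EuclideanSpace ℝ (Fin d)) (s : ℝ) :
    HasDerivAt (fun s : ℝ => F (x + s • v)) ⟪gradF (x + s • v), v⟫ s := by
  have h1 : HasDerivAt (fun s : ℝ => x + s • v) v s := by
    simpa using ((hasDerivAt_id s).smul_const v).const_add x
  have h2 := (hgrad (x + s • v)).hasFDerivAt.comp_hasDerivAt s h1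
  simpa [InnerProductSpace.toDual_apply_apply, Function.comp_def] using h2

lemma descent_lemma {d : ℕ} (F : EuclideanSpace ℝ (Fin d) → ℝ)
    (gradF : EuclideanSpace ℝ (Fin d) → EuclideanSpace ℝ (Fin d)) (L : ℝ)
    (hgrad : ∀ x, HasGradientAt F (gradF x) x)
    (hLip : ∀ x y, ‖gradF x - gradF y‖ ≤ L * ‖x - y‖)
    (x v : EuclideanSpace ℝ (Fin d)) :
    F (x + v) ≤ F x + ⟪gradF x, v⟫ + L / 2 * ‖v‖ ^ 2 := by
  set ψ : ℝ → ℝ := fun s => F (x + s • v) - s * ⟪gradF x, v⟫ - L / 2 * (s ^ 2 * ‖v‖ ^ 2) with hψdef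
  have hψ : ∀ s : ℝ, HasDerivAt ψ
      (⟪gradF (x + s • v), v⟫ - ⟪gradF x, v⟫ - L / 2 * (2 * s * ‖v‖ ^ 2)) s := by
    intro s
    have h1 := line_hasDerivAt F gradF hgrad x v s
    have h2 : HasDerivAt (fun s : ℝ => s * ⟪gradF x, v⟫) ⟪gradF x, v⟫ s := by
      simpa using (hasDerivAt_id s).mul_const ⟪gradF x, v⟫
    have h3 : HasDerivAt (fun s : ℝ => L / 2 * (s ^ 2 * ‖v‖ ^ 2)) (L / 2 * (2 * s * ‖v‖ ^ 2)) s := by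
      have := ((hasDerivAt_pow 2 s).mul_const (‖v‖ ^ 2)).const_mul (L / 2)
      simpa [mul_comm, mul_assoc, mul_left_comm] using this
    exact (h1.sub h2).sub h3
  have hanti : AntitoneOn ψ (Set.Icc (0:ℝ) 1) := by
    apply antitoneOn_of_deriv_nonpos (convex_Icc 0 1)
    · exact fun s _ => (hψ s).continuousAt.continuousWithinAt
    · exact fun s _ => ((hψ s).differentiableAt).differentiableWithinAt
    · intro s hs
      rw [interior_Icc] at hs
      rw [(hψ s).deriv]
      have hinner : ⟪gradF (x + s • v), v⟫ - ⟪gradF x, v⟫ = ⟪gradF (x + s • v) - gradF x, v⟫ := by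
        rw [inner_sub_left]
      have hcs : ⟪gradF (x + s • v) - gradF x, v⟫ ≤ ‖gradF (x + s • v) - gradF x‖ * ‖v‖ :=
        real_inner_le_norm _ _
      have hlip : ‖gradF (x + s • v) - gradF x‖ ≤ L * (s * ‖v‖) := by
        have := hLip (x + s • v) x
        simpa [norm_smul, abs_of_pos hs.1] using this
      have hv : (0:ℝ) ≤ ‖v‖ := norm_nonneg _
      nlinarith [hs.1, mul_le_mul_of_nonneg_right hlip hv]
  have h01 := hanti (Set.left_mem_Icc.mpr zero_le_one) (Set.right_mem_Icc.mpr zero_le_one) zero_le_one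
  simp only [hψdef, zero_smul, one_smul, add_zero, one_pow, one_mul, zero_pow, zero_mul,
    mul_zero, sub_zero] at h01
  linarith

lemma telescope_div_bound (Δ : ℕ → ℝ) (hΔ : ∀ t, 0 ≤ Δ t) (η : ℕ → ℝ) :
    ∀ T : ℕ, ∀ hT : 1 ≤ T,
    (∀ t ∈ Finset.Icc 1 T, 0 < η t) →
    (∀ s ∈ Finset.Icc 1 T, ∀ t ∈ Finset.Icc 1 T, s ≤ t → η t ≤ η s) →
    ∑ t ∈ Finset.Icc 1 T, (Δ t - Δ (t + 1)) / η t
      ≤ ((Finset.Icc 1 T).sup' (Finset.nonempty_Icc.mpr hT) Δ) / η T - Δ (T + 1) / η T := by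
  intro T hT
  induction T, hT using Nat.le_induction with
  | base =>
    intro _ _
    simp [Finset.Icc_self, sub_div]
  | succ T hT ih =>
    intro hpos hmono
    have hsub : Finset.Icc 1 T ⊆ Finset.Icc 1 (T + 1) :=
      Finset.Icc_subset_Icc_right (Nat.le_succ T)
    have ihT := ih (fun t ht => hpos t (hsub ht))
      (fun s hs t ht hst => hmono s (hsub hs) t (hsub ht) hst)
    have hne : (Finset.Icc 1 T).Nonempty := Finset.nonempty_Icc.mpr hT
    have hne' : (Finset.Icc 1 (T + 1)).Nonempty := Finset.nonempty_Icc.mpr (by omega)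
    set M := (Finset.Icc 1 T).sup' hne Δ with hM
    set M' := (Finset.Icc 1 (T + 1)).sup' hne' Δ with hM'
    have hMM' : M ≤ M' := Finset.sup'_mono Δ hsub hne
    have hmemT : T ∈ Finset.Icc 1 (T + 1) := by simp [Finset.mem_Icc]; omega
    have hmemT1 : T + 1 ∈ Finset.Icc 1 (T + 1) := by simp [Finset.mem_Icc]
    have hΔM' : Δ (T + 1) ≤ M' := Finset.le_sup' Δ hmemT1
    have ha : 0 < η T := hpos T hmemT
    have hb : 0 < η (T + 1) := hpos (T + 1) hmemT1
    have hba : η (T + 1) ≤ η T := hmono T hmemT (T + 1) hmemT1 (Nat.le_succ T)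
    have hM0 : 0 ≤ M := le_trans (hΔ 1) (Finset.le_sup' Δ (by simp [Finset.mem_Icc]; omega))
    rw [Finset.sum_Icc_succ_top (by omega : 1 ≤ T + 1)]
    have num : 0 ≤ M' * η T - M * η (T + 1) - Δ (T + 1) * (η T - η (T + 1)) := by nlinarith
    have key : M' / η (T + 1) - (M / η T - Δ (T + 1) / η T + Δ (T + 1) / η (T + 1))
        = (M' * η T - M * η (T + 1) - Δ (T + 1) * (η T - η (T + 1))) / (η T * η (T + 1)) := by
      field_simp
      ring
    have hnn : 0 ≤ M' / η (T + 1) - (M / η T - Δ (T + 1) / η T + Δ (T + 1) / η (T + 1)) := by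
      rw [key]; exact div_nonneg num (mul_pos ha hb).le
    have hsplit : (Δ (T + 1) - Δ (T + 2)) / η (T + 1)
        = Δ (T + 1) / η (T + 1) - Δ (T + 2) / η (T + 1) := sub_div _ _ _
    have : Δ (T + 1 + 1) = Δ (T + 2) := by norm_num
    linarith [ihT]

theorem smooth_descent_sum_bound {d : ℕ} (F : EuclideanSpace ℝ (Fin d) → ℝ)
    (gradF : EuclideanSpace ℝ (Fin d) → EuclideanSpace ℝ (Fin d)) (L : ℝ)
    (hgrad : ∀ x, HasGradientAt F (gradF x) x)
    (hLip : ∀ x y, ‖gradF x - gradF y‖ ≤ L * ‖x - y‖)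
    (hbdd : BddBelow (Set.range F))
    (T : ℕ) (hT : 1 ≤ T)
    (g : ℕ → EuclideanSpace ℝ (Fin d)) (η : ℕ → ℝ)
    (hηpos : ∀ t ∈ Finset.Icc 1 T, 0 < η t)
    (hηmono : ∀ s ∈ Finset.Icc 1 T, ∀ t ∈ Finset.Icc 1 T, s ≤ t → η t ≤ η s)
    (w : ℕ → EuclideanSpace ℝ (Fin d))
    (hwrec : ∀ t, w (t+1) = w t - η t • g t) :
    ∑ t ∈ Finset.Icc 1 T, ‖gradF (w t)‖^2
      ≤ ((Finset.Icc 1 T).sup' (Finset.nonempty_Icc.mpr hT)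
            (fun t => F (w t) - sInf (Set.range F))) / η T
        + (L/2) * ∑ t ∈ Finset.Icc 1 T, η t * ‖g t‖^2
        + ∑ t ∈ Finset.Icc 1 T, ⟪gradF (w t) - g t, gradF (w t)⟫ := by
  set Finf := sInf (Set.range F) with hFinf
  have hle : ∀ y, Finf ≤ F y := fun y => csInf_le hbdd ⟨y, rfl⟩
  set Δ : ℕ → ℝ := fun t => F (w t) - Finf with hΔdef
  have hΔnn : ∀ t, 0 ≤ Δ t := fun t => by simp [hΔdef, hle (w t)]
  -- per-step bound
  have hstep : ∀ t ∈ Finset.Icc 1 T, ‖gradF (w t)‖ ^ 2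
      ≤ (Δ t - Δ (t + 1)) / η t + L / 2 * (η t * ‖g t‖ ^ 2)
        + ⟪gradF (w t) - g t, gradF (w t)⟫ := by
    intro t ht
    have hη := hηpos t ht
    have hdesc := descent_lemma F gradF L hgrad hLip (w t) (-(η t • g t))
    have hwt : w (t + 1) = w t + -(η t • g t) := by rw [hwrec t, sub_eq_add_neg]
    rw [← hwt] at hdesc
    have hinner1 : ⟪gradF (w t), -(η t • g t)⟫ = -(η t * ⟪gradF (w t), g t⟫) := by
      rw [inner_neg_right, real_inner_smul_right]
    have hnorm1 : ‖-(η t • g t)‖ ^ 2 = η t ^ 2 * ‖g t‖ ^ 2 := by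
      rw [norm_neg, norm_smul, mul_pow, Real.norm_eq_abs, sq_abs]
    rw [hinner1, hnorm1] at hdesc
    have hexp : ⟪gradF (w t) - g t, gradF (w t)⟫
        = ‖gradF (w t)‖ ^ 2 - ⟪gradF (w t), g t⟫ := by
      rw [inner_sub_left, real_inner_self_eq_norm_sq, real_inner_comm (g t) (gradF (w t))]
    have hdiv : ⟪gradF (w t), g t⟫ - L / 2 * (η t * ‖g t‖ ^ 2) ≤ (Δ t - Δ (t + 1)) / η t := by
      rw [le_div_iff₀ hη]
      have hΔeq : Δ t - Δ (t + 1) = F (w t) - F (w (t + 1)) := by simp [hΔdef]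
      rw [hΔeq]
      nlinarith [hdesc]
    linarith
  calc ∑ t ∈ Finset.Icc 1 T, ‖gradF (w t)‖ ^ 2
      ≤ ∑ t ∈ Finset.Icc 1 T, ((Δ t - Δ (t + 1)) / η t + L / 2 * (η t * ‖g t‖ ^ 2)
          + ⟪gradF (w t) - g t, gradF (w t)⟫) := Finset.sum_le_sum hstep
    _ = ∑ t ∈ Finset.Icc 1 T, (Δ t - Δ (t + 1)) / η t
          + L / 2 * ∑ t ∈ Finset.Icc 1 T, η t * ‖g t‖ ^ 2
          + ∑ t ∈ Finset.Icc 1 T, ⟪gradF (w t) - g t, gradF (w t)⟫ := by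
        rw [Finset.sum_add_distrib, Finset.sum_add_distrib, Finset.mul_sum]
    _ ≤ _ := by
        have htel := telescope_div_bound Δ hΔnn η T hT hηpos hηmono
        have hηT : 0 < η T := hηpos T (by simp [Finset.mem_Icc]; omega)
        have hlast : 0 ≤ Δ (T + 1) / η T := div_nonneg (hΔnn _) hηT.le
        have : ((Finset.Icc 1 T).sup' (Finset.nonempty_Icc.mpr hT)
            (fun t => F (w t) - sInf (Set.range F)))
            = (Finset.Icc 1 T).sup' (Finset.nonempty_Icc.mpr hT) Δ := rfl
        rw [this]
        linarith
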